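/- There exist absolute constants C₀ ≥ 1 and c₀ ∈ (0,1] such that the following holds for every C ≥ C₀ and every ε ∈ (0, c₀/C]. Let N ≥ 1 and let x̂, ŵ, ẑ ∈ ℝ^N with v̂ = x̂ + ŵ. Let Z = supp(ẑ) and suppose: (a) Z ⊆ supp(x̂); (b) 2‖ŵ‖₂ ≤ ε·|x̂[i]| for every i ∈ supp(x̂); (c) for every i ∈ Z, |ẑ[i] − v̂[i]| ≤ Cε·|v̂[i]| and |v̂[i]| ≥ (1 − 2Cε)·max_j |v̂[j] − ẑ[j]|. Let X ⊆ {0,…,N−1} be any set with |X| = |Z| such that |x̂[j]| ≤ |x̂[i]| for all i ∈ X and j ∉ X (a set of positions of the |Z| largest coordinates of x̂ in absolute value). Then ‖x̂ − ẑ‖₂² ≤ 4ε²(C+1)²·Σ_{i∈X} x̂[i]² + (1 + 5Cε)·Σ_{i∉X} x̂[i]². -/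

import Mathlib

/-- Comparing sums over equal-cardinality finsets via a pairwise bound. -/
lemma stmt5_sum_le_sum_of_card_eq {α : Type*} (A B : Finset α) (f g : α → ℝ)
    (hcard : A.card = B.card) (hfg : ∀ j ∈ A, ∀ i ∈ B, f j ≤ g i) :
    ∑ j ∈ A, f j ≤ ∑ i ∈ B, g i := by
  rcases B.eq_empty_or_nonempty with hB | hB
  · have : A = ∅ := Finset.card_eq_zero.mp (by rw [hcard, hB]; simp)
    simp [this, hB]
  · have h1 : ∀ j ∈ A, f j ≤ B.inf' hB g := fun j hj =>
      Finset.le_inf' hB _ (fun i hi => hfg j hj i hi)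
    calc ∑ j ∈ A, f j ≤ A.card • B.inf' hB g := Finset.sum_le_card_nsmul A f _ h1
      _ = B.card • B.inf' hB g := by rw [hcard]
      _ ≤ ∑ i ∈ B, g i := Finset.card_nsmul_le_sum B g _ (fun i hi => Finset.inf'_le g hi)

/-- Per-element bound on the recovered set. -/
lemma stmt5_elem (C ε x w z : ℝ) (hC : 100 ≤ C) (hε : 0 < ε) (ht : C * ε ≤ 1/42)
    (hc : |z - (x + w)| ≤ C * ε * |x + w|) (hw : |w| ≤ ε / 2 * |x|) :
    (x - z) ^ 2 ≤ 4 * ε ^ 2 * (C + 1) ^ 2 * x ^ 2 := by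
  have hε1 : ε ≤ 1 := by nlinarith
  have h1 : |x - z| ≤ 2 * ε * (C + 1) * |x| := by
    have h2 : |x - z| ≤ |z - (x + w)| + |w| := by
      have e : x - z = (x + w - z) + (-w) := by ring
      rw [e]
      calc |(x + w - z) + (-w)| ≤ |x + w - z| + |(-w)| := abs_add_le _ _
        _ = |z - (x+w)| + |w| := by rw [abs_neg, abs_sub_comm]
    have h3 : |x + w| ≤ |x| + |w| := abs_add_le _ _
    have hx : (0:ℝ) ≤ |x| := abs_nonneg _
    have htn : 0 ≤ C * ε := by nlinarith
    nlinarith [abs_nonneg w, mul_le_mul_of_nonneg_left h3 htn]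
  calc (x - z)^2 = |x - z|^2 := (sq_abs _).symm
    _ ≤ (2 * ε * (C+1) * |x|)^2 := by
        apply pow_le_pow_left₀ (abs_nonneg _) h1
    _ = 4 * ε ^ 2 * (C + 1) ^ 2 * x ^ 2 := by rw [mul_pow, mul_pow, mul_pow, sq_abs]; ring

/-- The pairwise numeric bound. -/
lemma stmt5_pair (C ε a b : ℝ) (hC : 100 ≤ C) (hε : 0 < ε) (ht : C * ε ≤ 1/42)
    (ha : 0 ≤ a) (hb : 0 ≤ b)
    (h : (1 - 2 * (C * ε)) * ((1 - ε / 2) * a) ≤ (1 + ε / 2) * b) :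
    a ^ 2 ≤ (1 + 5 * C * ε - 4 * ε ^ 2 * (C + 1) ^ 2) * b ^ 2 := by
  set t := C * ε with htdef
  have ht0 : 0 < t := by positivity
  have hεt : ε ≤ t / 100 := by nlinarith
  have hμ : 4 * ε ^ 2 * (C + 1) ^ 2 ≤ t / 10 := by nlinarith [sq_nonneg ε]
  have hc0 : 0 < 1 - 2.005 * t := by nlinarith
  have hlow : (1 - 2.005 * t) * a ≤ (1 + t/200) * b := by nlinarith [mul_nonneg ht0.le hε.le]
  have hsq : ((1 - 2.005*t) * a)^2 ≤ ((1 + t/200) * b)^2 :=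
    pow_le_pow_left₀ (by positivity) hlow 2
  have poly : (1 + t/200)^2 ≤ (1 + 4.9*t) * (1 - 2.005*t)^2 := by
    nlinarith [mul_nonneg ht0.le (by linarith : (0:ℝ) ≤ 1/42 - t),
      mul_nonneg (mul_nonneg ht0.le ht0.le) ht0.le]
  have key : a ^ 2 ≤ (1 + 4.9 * t) * b ^ 2 := by
    have h2 : ((1 + t/200) * b)^2 ≤ (1 + 4.9*t) * (1 - 2.005*t)^2 * b^2 := by
      rw [mul_pow]
      exact mul_le_mul_of_nonneg_right poly (sq_nonneg b)
    have h3 : (1 - 2.005*t)^2 * a^2 ≤ (1 - 2.005*t)^2 * ((1 + 4.9*t) * b^2) := by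
      nlinarith [hsq]
    exact le_of_mul_le_mul_left h3 (by positivity)
  nlinarith [sq_nonneg b]

set_option maxHeartbeats 1000000 in
open Classical in
/-- The ℓ₂-error bound for partial estimates satisfying the peeling
invariants. -/
theorem stmt_5 :
    ∃ C0 c0 : ℝ, 1 ≤ C0 ∧ 0 < c0 ∧ c0 ≤ 1 ∧
      ∀ C : ℝ, C0 ≤ C → ∀ ε : ℝ, 0 < ε → ε ≤ c0 / C →
      ∀ N : ℕ, 1 ≤ N → ∀ xhat what zhat : Fin N → ℝ,
      (∀ i, zhat i ≠ 0 → xhat i ≠ 0) →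
      (∀ i, xhat i ≠ 0 → 2 * Real.sqrt (∑ j, what j ^ 2) ≤ ε * |xhat i|) →
      (∀ i, zhat i ≠ 0 →
        |zhat i - (xhat i + what i)| ≤ C * ε * |xhat i + what i| ∧
        ∀ j, (1 - 2 * C * ε) * |(xhat j + what j) - zhat j| ≤ |xhat i + what i|) →
      ∀ X : Finset (Fin N),
        X.card = (Finset.univ.filter (fun i => zhat i ≠ 0)).card →
        (∀ i ∈ X, ∀ j, j ∉ X → |xhat j| ≤ |xhat i|) →
      ∑ i, (xhat i - zhat i) ^ 2 ≤
        4 * ε ^ 2 * (C + 1) ^ 2 * ∑ i ∈ X, xhat i ^ 2 +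
          (1 + 5 * C * ε) * ∑ i ∈ Xᶜ, xhat i ^ 2 := by
  refine ⟨100, 1/42, by norm_num, by norm_num, by norm_num, ?_⟩
  intro C hC ε hε hεc N hN xhat what zhat h1 h2 h3 X hXcard hXtop
  have hCpos : (0:ℝ) < C := by linarith
  have ht : C * ε ≤ 1/42 := by
    calc C * ε ≤ C * (1/42 / C) := mul_le_mul_of_nonneg_left hεc hCpos.le
      _ = 1/42 := by field_simp
  -- shorthand
  set Z : Finset (Fin N) := Finset.univ.filter (fun i => zhat i ≠ 0) with hZdef
  set μ : ℝ := 4 * ε ^ 2 * (C + 1) ^ 2 with hμdef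
  set η : ℝ := 5 * C * ε with hηdef
  -- bound on |what i| for i in supp xhat
  have hwbound : ∀ i : Fin N, xhat i ≠ 0 → |what i| ≤ ε / 2 * |xhat i| := by
    intro i hxi
    have h0 : |what i| ≤ Real.sqrt (∑ j, what j ^ 2) := by
      rw [← Real.sqrt_sq_eq_abs]
      exact Real.sqrt_le_sqrt (Finset.single_le_sum
        (fun j _ => sq_nonneg (what j)) (Finset.mem_univ i))
    have := h2 i hxi
    linarith
  -- membership facts
  have hZmem : ∀ i, i ∈ Z ↔ zhat i ≠ 0 := by
    intro i; simp [hZdef]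
  -- per-element bound on Z
  have hA : ∑ i ∈ Z, (xhat i - zhat i) ^ 2 ≤ μ * ∑ i ∈ Z, xhat i ^ 2 := by
    rw [Finset.mul_sum]
    apply Finset.sum_le_sum
    intro i hi
    have hzi : zhat i ≠ 0 := (hZmem i).mp hi
    have hxi : xhat i ≠ 0 := h1 i hzi
    exact stmt5_elem C ε (xhat i) (what i) (zhat i) hC hε ht (h3 i hzi).1
      (hwbound i hxi)
  -- on complement, zhat = 0
  have hB : ∑ i ∈ Zᶜ, (xhat i - zhat i) ^ 2 = ∑ i ∈ Zᶜ, xhat i ^ 2 := by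
    apply Finset.sum_congr rfl
    intro i hi
    have : zhat i = 0 := by
      by_contra hz
      exact (Finset.mem_compl.mp hi) ((hZmem i).mpr hz)
    rw [this]; ring
  -- set identities
  have e1 : Zᶜ ∩ X = X \ Z := by
    ext i
    simp only [Finset.mem_sdiff, Finset.mem_compl, Finset.mem_inter]
    tauto
  have e2 : Zᶜ \ X = Xᶜ \ Z := by
    ext i
    simp only [Finset.mem_sdiff, Finset.mem_compl]
    tauto
  have e3 : Xᶜ ∩ Z = Z \ X := by
    ext i
    simp only [Finset.mem_sdiff, Finset.mem_compl, Finset.mem_inter]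
    tauto
  -- the four pieces
  set S1 : ℝ := ∑ i ∈ Z ∩ X, xhat i ^ 2 with hS1
  set S2 : ℝ := ∑ i ∈ Z \ X, xhat i ^ 2 with hS2
  set S3 : ℝ := ∑ i ∈ X \ Z, xhat i ^ 2 with hS3
  set S4 : ℝ := ∑ i ∈ Xᶜ \ Z, xhat i ^ 2 with hS4
  have d1 : ∑ i ∈ Z, xhat i ^ 2 = S1 + S2 := (Finset.sum_inter_add_sum_sdiff Z X _).symm
  have d2 : ∑ i ∈ Zᶜ, xhat i ^ 2 = S3 + S4 := by
    rw [← Finset.sum_inter_add_sum_sdiff Zᶜ X (fun i => xhat i ^ 2), e1, e2]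
  have d3 : ∑ i ∈ X, xhat i ^ 2 = S1 + S3 := by
    rw [← Finset.sum_inter_add_sum_sdiff X Z (fun i => xhat i ^ 2), Finset.inter_comm]
  have d4 : ∑ i ∈ Xᶜ, xhat i ^ 2 = S2 + S4 := by
    rw [← Finset.sum_inter_add_sum_sdiff Xᶜ Z (fun i => xhat i ^ 2), e3]
  -- cardinalities
  have hcards : (X \ Z).card = (Z \ X).card := by
    have c1 := Finset.card_sdiff_add_card_inter X Z
    have c2 := Finset.card_sdiff_add_card_inter Z X
    have c3 : (X ∩ Z).card = (Z ∩ X).card := by rw [Finset.inter_comm]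
    have c4 : X.card = Z.card := hXcard
    omega
  -- key pairwise comparison
  have key : S3 ≤ (1 + η - μ) * S2 := by
    rw [hS3, hS2, Finset.mul_sum]
    apply stmt5_sum_le_sum_of_card_eq _ _ _ _ hcards
    intro j hj i hi
    have hjX := Finset.mem_sdiff.mp hj
    have hiZ := Finset.mem_sdiff.mp hi
    have hzi : zhat i ≠ 0 := (hZmem i).mp hiZ.1
    have hzj : zhat j = 0 := by
      by_contra hz
      exact hjX.2 ((hZmem j).mpr hz)
    have hxi : xhat i ≠ 0 := h1 i hzi
    have hcoef : 0 ≤ 1 + η - μ := by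
      rw [hηdef, hμdef]
      nlinarith [sq_nonneg ε, mul_pos hCpos hε]
    by_cases hxj : xhat j = 0
    · rw [hxj]
      simpa using mul_nonneg hcoef (sq_nonneg (xhat i))
    · -- derive the comparison from the invariant
      have hinv := (h3 i hzi).2 j
      rw [hzj, sub_zero] at hinv
      have hwj := hwbound j hxj
      have hwi := hwbound i hxi
      have hvj : (1 - ε/2) * |xhat j| ≤ |xhat j + what j| := by
        have : |xhat j| ≤ |xhat j + what j| + |what j| := by
          calc |xhat j| = |(xhat j + what j) + (-what j)| := by ring_nf
            _ ≤ |xhat j + what j| + |(-what j)| := abs_add_le _ _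
            _ = |xhat j + what j| + |what j| := by rw [abs_neg]
        nlinarith [abs_nonneg (xhat j)]
      have hvi : |xhat i + what i| ≤ (1 + ε/2) * |xhat i| := by
        have := abs_add_le (xhat i) (what i)
        nlinarith [abs_nonneg (xhat i)]
      have h2t : (0:ℝ) ≤ 1 - 2 * (C * ε) := by linarith
      have hmain : (1 - 2 * (C * ε)) * ((1 - ε/2) * |xhat j|) ≤ (1 + ε/2) * |xhat i| := by
        calc (1 - 2 * (C * ε)) * ((1 - ε/2) * |xhat j|)
            ≤ (1 - 2 * (C * ε)) * |xhat j + what j| :=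
              mul_le_mul_of_nonneg_left hvj h2t
          _ = (1 - 2 * C * ε) * |xhat j + what j| := by ring
          _ ≤ |xhat i + what i| := hinv
          _ ≤ (1 + ε/2) * |xhat i| := hvi
      have := stmt5_pair C ε (|xhat j|) (|xhat i|) hC hε ht (abs_nonneg _)
        (abs_nonneg _) hmain
      rw [sq_abs, sq_abs] at this
      calc xhat j ^ 2 ≤ (1 + 5 * C * ε - 4 * ε ^ 2 * (C + 1) ^ 2) * xhat i ^ 2 := this
        _ = (1 + η - μ) * xhat i ^ 2 := by rw [hηdef, hμdef]
  -- assemble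
  have hμ0 : 0 ≤ μ := by rw [hμdef]; positivity
  have hη0 : 0 ≤ η := by rw [hηdef]; nlinarith
  have hS2n : 0 ≤ S2 := Finset.sum_nonneg fun i _ => sq_nonneg _
  have hS3n : 0 ≤ S3 := Finset.sum_nonneg fun i _ => sq_nonneg _
  have hS4n : 0 ≤ S4 := Finset.sum_nonneg fun i _ => sq_nonneg _
  calc ∑ i, (xhat i - zhat i) ^ 2
      = ∑ i ∈ Z, (xhat i - zhat i) ^ 2 + ∑ i ∈ Zᶜ, (xhat i - zhat i) ^ 2 :=
        (Finset.sum_add_sum_compl Z _).symm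
    _ ≤ μ * (S1 + S2) + (S3 + S4) := by rw [hB, d2, ← d1]; linarith [hA]
    _ ≤ μ * (S1 + S3) + (1 + η) * (S2 + S4) := by
        nlinarith [key, mul_nonneg hμ0 hS3n, mul_nonneg hη0 hS4n]
    _ = μ * ∑ i ∈ X, xhat i ^ 2 + (1 + η) * ∑ i ∈ Xᶜ, xhat i ^ 2 := by rw [d3, d4]
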